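/- arXiv:2306.06626 — 4 statements merged into one kernel-verified Lean document; each statement's English description precedes it below -/
import Mathlib

section
/- For any normalized finite dataset and every s > 0, the data separation function satisfies λ(s) ≤ 1. -/
open MeasureTheory ProbabilityTheory Real

open scoped ENNReal NNReal

/-- Standard Gaussian measure `N(0, I_d)` on `ℝ^d`. -/
noncomputable def stdGaussian (d : ℕ) : Measure (EuclideanSpace ℝ (Fin d)) :=
  (Measure.pi fun _ : Fin d => gaussianReal 0 1).map (EuclideanSpace.equiv (Fin d) ℝ).symm

/-- Softmax posterior weights `ρ_s(x_i | y)`. -/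
noncomputable def rho (d n : ℕ) (s : ℝ) (x : Fin n → EuclideanSpace ℝ (Fin d))
    (i : Fin n) (y : EuclideanSpace ℝ (Fin d)) : ℝ :=
  Real.exp (-(s ^ 2 / 2) * ‖x i - y‖ ^ 2) / ∑ l, Real.exp (-(s ^ 2 / 2) * ‖x l - y‖ ^ 2)

/-- The data separation function `λ(s)`. -/
noncomputable def lamSep (d n : ℕ) (x : Fin n → EuclideanSpace ℝ (Fin d)) (s : ℝ) : ℝ :=
  (1 / ((d : ℝ) * n)) *
    ∑ j, ∫ z, ‖∑ i, rho d n s x i (x j + s⁻¹ • z) • x i‖ ^ 2 ∂ stdGaussian d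

namespace LamSepAux

/-- Product lintegral over a finite product measure. -/
theorem lintegral_pi_prod {m : ℕ} (μ : Fin m → Measure ℝ) [∀ k, SigmaFinite (μ k)]
    (f : Fin m → ℝ → ℝ≥0∞) (hf : ∀ k, Measurable (f k)) :
    ∫⁻ u : Fin m → ℝ, ∏ k, f k (u k) ∂(Measure.pi μ) = ∏ k, ∫⁻ t, f k t ∂(μ k) := by
  induction m with
  | zero =>
      rw [Measure.pi_of_empty]
      simp
  | succ m ih =>
      have h := measurePreserving_piFinSuccAbove μ 0
      have hprod : Measurable fun w : Fin m → ℝ => ∏ k : Fin m, f k.succ (w k) :=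
        Finset.measurable_prod _ fun k _ => (hf k.succ).comp (measurable_pi_apply k)
      have hmeas : Measurable fun p : ℝ × (Fin m → ℝ) =>
          f 0 p.1 * ∏ k : Fin m, f k.succ (p.2 k) :=
        ((hf 0).comp measurable_fst).mul (hprod.comp measurable_snd)
      have key : ∫⁻ u : Fin (m + 1) → ℝ,
          (fun p : ℝ × (Fin m → ℝ) => f 0 p.1 * ∏ k : Fin m, f k.succ (p.2 k))
            ((MeasurableEquiv.piFinSuccAbove (fun _ => ℝ) 0) u) ∂(Measure.pi μ)
          = ∫⁻ p : ℝ × (Fin m → ℝ), f 0 p.1 * ∏ k : Fin m, f k.succ (p.2 k)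
            ∂((μ 0).prod (Measure.pi fun k => μ ((0 : Fin (m + 1)).succAbove k))) :=
        h.lintegral_comp hmeas
      have hcongr : ∀ u : Fin (m + 1) → ℝ,
          (fun p : ℝ × (Fin m → ℝ) => f 0 p.1 * ∏ k : Fin m, f k.succ (p.2 k))
            ((MeasurableEquiv.piFinSuccAbove (fun _ => ℝ) 0) u)
          = ∏ k, f k (u k) := by
        intro u
        rw [Fin.prod_univ_succ]
        simp [MeasurableEquiv.piFinSuccAbove_apply, Fin.zero_succAbove, Fin.removeNth,
          Fin.tail]
      calc ∫⁻ u : Fin (m + 1) → ℝ, ∏ k, f k (u k) ∂(Measure.pi μ)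
          = ∫⁻ p : ℝ × (Fin m → ℝ), f 0 p.1 * ∏ k : Fin m, f k.succ (p.2 k)
            ∂((μ 0).prod (Measure.pi fun k => μ ((0 : Fin (m + 1)).succAbove k))) := by
            rw [← key]
            exact lintegral_congr fun u => (hcongr u).symm
        _ = (∫⁻ t, f 0 t ∂(μ 0)) *
            ∫⁻ w, ∏ k : Fin m, f k.succ (w k)
              ∂(Measure.pi fun k => μ ((0 : Fin (m + 1)).succAbove k)) :=
            lintegral_prod_mul (hf 0).aemeasurable hprod.aemeasurable
        _ = ∏ k, ∫⁻ t, f k t ∂(μ k) := by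
            have : (fun k : Fin m => μ ((0 : Fin (m + 1)).succAbove k))
                = fun k : Fin m => μ k.succ := by
              funext k; rw [Fin.zero_succAbove]
            rw [this, ih (fun k => μ k.succ) (fun k => f k.succ) (fun k => hf k.succ),
              Fin.prod_univ_succ]

/-- Componentwise map of a finite product measure. -/
theorem pi_map_comp {m : ℕ} (μ : Fin m → Measure ℝ) [∀ k, IsProbabilityMeasure (μ k)]
    (f : Fin m → ℝ → ℝ) (hf : ∀ k, Measurable (f k))
    (ν : Fin m → Measure ℝ) [∀ k, SigmaFinite (ν k)]
    (hν : ∀ k, (μ k).map (f k) = ν k) :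
    (Measure.pi μ).map (fun u k => f k (u k)) = Measure.pi ν := by
  have hT : Measurable fun (u : Fin m → ℝ) k => f k (u k) :=
    measurable_pi_lambda _ fun k => (hf k).comp (measurable_pi_apply k)
  refine (Measure.pi_eq (μ := ν) fun S hS => ?_).symm
  rw [Measure.map_apply hT (MeasurableSet.univ_pi hS)]
  have hpre : (fun (u : Fin m → ℝ) k => f k (u k)) ⁻¹' Set.pi Set.univ S
      = Set.pi Set.univ fun k => f k ⁻¹' S k := by
    ext u
    simp [Set.mem_pi]
  rw [hpre, Measure.pi_pi]
  refine Finset.prod_congr rfl fun k _ => ?_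
  rw [← hν k, Measure.map_apply (hf k) (hS k)]

/-- A finite product of Gaussians as a density with respect to Lebesgue measure. -/
theorem pi_gauss_withDensity {m : ℕ} (a : Fin m → ℝ) (v : ℝ≥0) (hv : v ≠ 0) :
    Measure.pi (fun k => gaussianReal (a k) v) =
      (volume : Measure (Fin m → ℝ)).withDensity
        (fun u => ∏ k, gaussianPDF (a k) v (u k)) := by
  refine Measure.pi_eq fun S hS => ?_
  rw [withDensity_apply _ (MeasurableSet.univ_pi hS), ← lintegral_indicator
    (MeasurableSet.univ_pi hS)]
  have hind : (Set.indicator (Set.pi Set.univ S) fun u => ∏ k, gaussianPDF (a k) v (u k))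
      = fun u => ∏ k, Set.indicator (S k) (gaussianPDF (a k) v) (u k) := by
    funext u
    by_cases hu : u ∈ Set.pi Set.univ S
    · rw [Set.indicator_of_mem hu]
      refine (Finset.prod_congr rfl fun k _ => ?_)
      rw [Set.indicator_of_mem (hu k (Set.mem_univ k))]
    · rw [Set.indicator_of_notMem hu]
      obtain ⟨k, hk⟩ := by
        simpa [Set.mem_pi] using hu
      exact (Finset.prod_eq_zero (Finset.mem_univ k)
        (by rw [Set.indicator_of_notMem hk])).symm
  rw [hind, volume_pi, lintegral_pi_prod _ _
    (fun k => (measurable_gaussianPDF (a k) v).indicator (hS k))]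
  refine Finset.prod_congr rfl fun k _ => ?_
  rw [lintegral_indicator (hS k) _, ← gaussianReal_apply _ hv (S k)]


section Main

variable {d n : ℕ}

local notation "E" => EuclideanSpace ℝ (Fin d)

/-- The variance `s⁻²` as a nonnegative real. -/
noncomputable def vv (s : ℝ) : ℝ≥0 := ⟨s⁻¹ ^ 2, sq_nonneg _⟩

lemma vv_ne_zero {s : ℝ} (hs : 0 < s) : vv s ≠ 0 := by
  intro h
  have : s⁻¹ ^ 2 = 0 := congrArg NNReal.toReal h
  exact (pow_ne_zero 2 (inv_ne_zero hs.ne')) this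

lemma Zpos (hn : 1 ≤ n) (s : ℝ) (x : Fin n → E) (y : E) :
    0 < ∑ l, rexp (-(s ^ 2 / 2) * ‖x l - y‖ ^ 2) := by
  have : Nonempty (Fin n) := Fin.pos_iff_nonempty.mp hn
  exact Finset.sum_pos (fun l _ => Real.exp_pos _) Finset.univ_nonempty

lemma rho_nonneg (hn : 1 ≤ n) (s : ℝ) (x : Fin n → E) (i : Fin n) (y : E) :
    0 ≤ rho d n s x i y :=
  div_nonneg (Real.exp_pos _).le (Zpos hn s x y).le

lemma rho_sum (hn : 1 ≤ n) (s : ℝ) (x : Fin n → E) (y : E) :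
    ∑ i, rho d n s x i y = 1 := by
  unfold rho
  rw [← Finset.sum_div, div_self (Zpos hn s x y).ne']

lemma rho_continuous (hn : 1 ≤ n) (s : ℝ) (x : Fin n → E) (i : Fin n) :
    Continuous (rho d n s x i) := by
  unfold rho
  refine Continuous.div ?_ (continuous_finset_sum _ fun l _ => ?_) fun y => (Zpos hn s x y).ne'
  · exact Real.continuous_exp.comp
      (continuous_const.mul ((continuous_const.sub continuous_id).norm.pow 2))
  · exact Real.continuous_exp.comp
      (continuous_const.mul ((continuous_const.sub continuous_id).norm.pow 2))

lemma rho_measurable (hn : 1 ≤ n) (s : ℝ) (x : Fin n → E) (i : Fin n) :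
    Measurable (rho d n s x i) :=
  (rho_continuous hn s x i).measurable

/-- Jensen / Cauchy-Schwarz pointwise bound. -/
lemma jensen (hn : 1 ≤ n) (s : ℝ) (x : Fin n → E) (y : E) :
    ‖∑ i, rho d n s x i y • x i‖ ^ 2 ≤ ∑ i, rho d n s x i y * ‖x i‖ ^ 2 := by
  set ρ : Fin n → ℝ := fun i => rho d n s x i y with hρ
  have hρ0 : ∀ i, 0 ≤ ρ i := fun i => rho_nonneg hn s x i y
  have h1 : ‖∑ i, ρ i • x i‖ ≤ ∑ i, ρ i * ‖x i‖ := by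
    refine (norm_sum_le _ _).trans (le_of_eq (Finset.sum_congr rfl fun i _ => ?_))
    rw [norm_smul, Real.norm_eq_abs, abs_of_nonneg (hρ0 i)]
  calc ‖∑ i, ρ i • x i‖ ^ 2 ≤ (∑ i, ρ i * ‖x i‖) ^ 2 := by
        exact pow_le_pow_left₀ (norm_nonneg _) h1 2
    _ = (∑ i, Real.sqrt (ρ i) * (Real.sqrt (ρ i) * ‖x i‖)) ^ 2 := by
        refine congrArg (· ^ 2) (Finset.sum_congr rfl fun i _ => ?_)
        rw [← mul_assoc, Real.mul_self_sqrt (hρ0 i)]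
    _ ≤ (∑ i, Real.sqrt (ρ i) ^ 2) * ∑ i, (Real.sqrt (ρ i) * ‖x i‖) ^ 2 :=
        Finset.sum_mul_sq_le_sq_mul_sq _ _ _
    _ = ∑ i, ρ i * ‖x i‖ ^ 2 := by
        have h2 : ∀ i : Fin n, Real.sqrt (ρ i) ^ 2 = ρ i := fun i => Real.sq_sqrt (hρ0 i)
        have h3 : (∑ i, Real.sqrt (ρ i) ^ 2) = 1 := by
          rw [Finset.sum_congr rfl fun i _ => h2 i]
          exact rho_sum hn s x y
        rw [h3, one_mul]
        refine Finset.sum_congr rfl fun i _ => ?_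
        rw [mul_pow, h2 i]

lemma stdGaussian_probability : IsProbabilityMeasure (stdGaussian d) := by
  unfold _root_.stdGaussian
  exact Measure.isProbabilityMeasure_map
    ((EuclideanSpace.equiv (Fin d) ℝ).symm.continuous.measurable.aemeasurable)

/-- The product of 1D Gaussian densities as an explicit Gaussian density on `ℝ^d`. -/
lemma dens_eq {s : ℝ} (hs : 0 < s) (a : E) (u : Fin d → ℝ) :
    ∏ k, gaussianPDFReal (a k) (vv s) (u k)
      = (Real.sqrt (2 * π * (vv s : ℝ)))⁻¹ ^ d *
        rexp (-(s ^ 2 / 2) * ‖(EuclideanSpace.equiv (Fin d) ℝ).symm u - a‖ ^ 2) := by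
  unfold gaussianPDFReal
  rw [Finset.prod_mul_distrib, Finset.prod_const, ← Real.exp_sum, Finset.card_univ,
    Fintype.card_fin]
  congr 1
  have hnorm : ‖(EuclideanSpace.equiv (Fin d) ℝ).symm u - a‖ ^ 2
      = ∑ k, (u k - a k) ^ 2 := by
    rw [EuclideanSpace.norm_eq, Real.sq_sqrt (Finset.sum_nonneg fun k _ => sq_nonneg _)]
    refine Finset.sum_congr rfl fun k _ => ?_
    simp only [Real.norm_eq_abs, sq_abs]
    rfl
  congr 1
  rw [hnorm, Finset.mul_sum]
  refine Finset.sum_congr rfl fun k _ => ?_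
  have hv : (vv s : ℝ) = s⁻¹ ^ 2 := rfl
  rw [hv]
  have hs' : s ≠ 0 := hs.ne'
  field_simp

/-- Pointwise symmetry of the Gaussian density times the softmax weight. -/
lemma key_pointwise (hn : 1 ≤ n) {s : ℝ} (hs : 0 < s) (x : Fin n → E)
    (i j : Fin n) (u : Fin d → ℝ) :
    (∏ k, gaussianPDF (x j k) (vv s) (u k)) *
        ENNReal.ofReal (rho d n s x i ((EuclideanSpace.equiv (Fin d) ℝ).symm u))
      = (∏ k, gaussianPDF (x i k) (vv s) (u k)) *
        ENNReal.ofReal (rho d n s x j ((EuclideanSpace.equiv (Fin d) ℝ).symm u)) := by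
  set w : E := (EuclideanSpace.equiv (Fin d) ℝ).symm u with hw
  have hprod : ∀ b : E, (∏ k, gaussianPDF (b k) (vv s) (u k))
      = ENNReal.ofReal (∏ k, gaussianPDFReal (b k) (vv s) (u k)) := by
    intro b
    unfold gaussianPDF
    rw [ENNReal.ofReal_prod_of_nonneg fun k _ => gaussianPDFReal_nonneg _ _ _]
  rw [hprod, hprod, ← ENNReal.ofReal_mul (Finset.prod_nonneg fun k _ =>
    gaussianPDFReal_nonneg _ _ _), ← ENNReal.ofReal_mul (Finset.prod_nonneg fun k _ =>
    gaussianPDFReal_nonneg _ _ _)]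
  congr 1
  rw [dens_eq hs (x j) u, dens_eq hs (x i) u]
  unfold rho
  rw [norm_sub_rev w (x j), norm_sub_rev w (x i)]
  ring

/-- The measure `γ ∘ (a + s⁻¹ • ·)⁻¹` expressed via a Lebesgue density on `ℝ^d`. -/
lemma Abar_eq (hn : 1 ≤ n) {s : ℝ} (hs : 0 < s) (x : Fin n → E) (i : Fin n) (a : E) :
    ∫⁻ z, ENNReal.ofReal (rho d n s x i (a + s⁻¹ • z)) ∂ stdGaussian d
      = ∫⁻ u : Fin d → ℝ, (∏ k, gaussianPDF (a k) (vv s) (u k)) *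
          ENNReal.ofReal (rho d n s x i ((EuclideanSpace.equiv (Fin d) ℝ).symm u))
          ∂(volume : Measure (Fin d → ℝ)) := by
  have hEm : Measurable ((EuclideanSpace.equiv (Fin d) ℝ).symm :
      (Fin d → ℝ) → E) :=
    (EuclideanSpace.equiv (Fin d) ℝ).symm.continuous.measurable
  have hρm : ∀ b : E, Measurable fun z : E =>
      ENNReal.ofReal (rho d n s x i (b + s⁻¹ • z)) := by
    intro b
    exact ENNReal.measurable_ofReal.comp ((rho_measurable hn s x i).comp
      (measurable_const.add (measurable_id.const_smul s⁻¹)))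
  have hT : Measurable fun (u : Fin d → ℝ) k => a k + s⁻¹ * u k :=
    measurable_pi_lambda _ fun k =>
      measurable_const.add (by fun_prop : Measurable fun u : Fin d → ℝ => s⁻¹ * u k)
  have hg : Measurable fun w : Fin d → ℝ =>
      ENNReal.ofReal (rho d n s x i ((EuclideanSpace.equiv (Fin d) ℝ).symm w)) :=
    ENNReal.measurable_ofReal.comp ((rho_measurable hn s x i).comp hEm)
  have hmap : (Measure.pi fun _ : Fin d => gaussianReal 0 1).map
      (fun u k => a k + s⁻¹ * u k) = Measure.pi fun k => gaussianReal (a k) (vv s) := by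
    refine pi_map_comp _ (fun k t => a k + s⁻¹ * t) (fun k =>
      (continuous_const.add (continuous_const.mul continuous_id)).measurable) _ fun k => ?_
    have h1 : (gaussianReal 0 1).map (s⁻¹ * ·) = gaussianReal 0 (vv s) := by
      rw [gaussianReal_map_const_mul]
      congr 1
      · ring
      · rw [mul_one]
        rfl
    have hc : (fun t : ℝ => a k + s⁻¹ * t) = (a k + ·) ∘ (s⁻¹ * ·) := rfl
    show (gaussianReal 0 1).map (fun t : ℝ => a k + s⁻¹ * t) = gaussianReal (a k) (vv s)
    rw [hc, ← Measure.map_map (by fun_prop : Measurable fun t : ℝ => a k + t)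
      (by fun_prop : Measurable fun t : ℝ => s⁻¹ * t), h1,
      gaussianReal_map_const_add, zero_add]
  calc ∫⁻ z, ENNReal.ofReal (rho d n s x i (a + s⁻¹ • z)) ∂ stdGaussian d
      = ∫⁻ u : Fin d → ℝ, ENNReal.ofReal
          (rho d n s x i (a + s⁻¹ • (EuclideanSpace.equiv (Fin d) ℝ).symm u))
          ∂(Measure.pi fun _ : Fin d => gaussianReal 0 1) := by
        unfold _root_.stdGaussian
        rw [lintegral_map (hρm a) hEm]
    _ = ∫⁻ u : Fin d → ℝ, ENNReal.ofReal
          (rho d n s x i ((EuclideanSpace.equiv (Fin d) ℝ).symm (fun k => a k + s⁻¹ * u k)))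
          ∂(Measure.pi fun _ : Fin d => gaussianReal 0 1) := rfl
    _ = ∫⁻ w : Fin d → ℝ, ENNReal.ofReal
          (rho d n s x i ((EuclideanSpace.equiv (Fin d) ℝ).symm w))
          ∂((Measure.pi fun _ : Fin d => gaussianReal 0 1).map (fun u k => a k + s⁻¹ * u k)) := by
        rw [lintegral_map hg hT]
    _ = ∫⁻ w : Fin d → ℝ, ENNReal.ofReal
          (rho d n s x i ((EuclideanSpace.equiv (Fin d) ℝ).symm w))
          ∂((volume : Measure (Fin d → ℝ)).withDensity
            fun u => ∏ k, gaussianPDF (a k) (vv s) (u k)) := by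
        rw [hmap]
        rw [show (Measure.pi fun k => gaussianReal (a k) (vv s))
            = (volume : Measure (Fin d → ℝ)).withDensity
              (fun u => ∏ k, gaussianPDF (a k) (vv s) (u k)) from
          pi_gauss_withDensity (fun k => a k) (vv s) (vv_ne_zero hs)]
    _ = ∫⁻ u : Fin d → ℝ, (∏ k, gaussianPDF (a k) (vv s) (u k)) *
          ENNReal.ofReal (rho d n s x i ((EuclideanSpace.equiv (Fin d) ℝ).symm u))
          ∂(volume : Measure (Fin d → ℝ)) := by
        rw [lintegral_withDensity_eq_lintegral_mul _
          ((Finset.measurable_prod Finset.univ fun k _ =>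
            (measurable_gaussianPDF (a k) (vv s)).comp (measurable_pi_apply k)) :
            Measurable fun u : Fin d → ℝ => ∏ k, gaussianPDF (a k) (vv s) (u k)) hg]
        rfl

/-- Symmetry of the averaged weights. -/
lemma Abar_symm (hn : 1 ≤ n) {s : ℝ} (hs : 0 < s) (x : Fin n → E) (i j : Fin n) :
    ∫⁻ z, ENNReal.ofReal (rho d n s x i (x j + s⁻¹ • z)) ∂ stdGaussian d
      = ∫⁻ z, ENNReal.ofReal (rho d n s x j (x i + s⁻¹ • z)) ∂ stdGaussian d := by
  rw [Abar_eq hn hs x i (x j), Abar_eq hn hs x j (x i)]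
  exact lintegral_congr fun u => key_pointwise hn hs x i j u

/-- Row sums of the averaged weights equal one. -/
lemma Abar_row_sum (hn : 1 ≤ n) {s : ℝ} (hs : 0 < s) (x : Fin n → E) (j : Fin n) :
    ∑ i, ∫⁻ z, ENNReal.ofReal (rho d n s x i (x j + s⁻¹ • z)) ∂ stdGaussian d = 1 := by
  haveI := (stdGaussian_probability (d := d))
  have hm : ∀ i : Fin n, Measurable fun z : E =>
      ENNReal.ofReal (rho d n s x i (x j + s⁻¹ • z)) := fun i =>
    ENNReal.measurable_ofReal.comp ((rho_measurable hn s x i).comp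
      (measurable_const.add (measurable_id.const_smul s⁻¹)))
  rw [← lintegral_finset_sum _ fun i _ => hm i]
  have hpt : ∀ z : E, ∑ i, ENNReal.ofReal (rho d n s x i (x j + s⁻¹ • z)) = 1 := by
    intro z
    rw [← ENNReal.ofReal_sum_of_nonneg fun i _ => rho_nonneg hn s x i _,
      rho_sum hn s x _, ENNReal.ofReal_one]
  rw [lintegral_congr hpt, lintegral_one, measure_univ]

end Main

end LamSepAux


/-- For any normalized finite dataset and every `s > 0`, the data separation function
satisfies `λ(s) ≤ 1`. -/
theorem lamSep_le_one (d n : ℕ) (hd : 1 ≤ d) (hn : 1 ≤ n)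
    (x : Fin n → EuclideanSpace ℝ (Fin d))
    (hmean : (n : ℝ)⁻¹ • ∑ i, x i = 0)
    (hvar : 1 / ((d : ℝ) * n) * ∑ i, ‖x i‖ ^ 2 = 1)
    (s : ℝ) (hs : 0 < s) :
    lamSep d n x s ≤ 1 := by
  classical
  haveI := LamSepAux.stdGaussian_probability (d := d)
  have hdn : (0 : ℝ) < (d : ℝ) * n :=
    mul_pos (by exact_mod_cast Nat.lt_of_lt_of_le Nat.zero_lt_one hd)
      (by exact_mod_cast Nat.lt_of_lt_of_le Nat.zero_lt_one hn)
  set A : Fin n → Fin n → ℝ≥0∞ := fun i j =>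
    ∫⁻ z, ENNReal.ofReal (rho d n s x i (x j + s⁻¹ • z)) ∂ stdGaussian d with hA
  set B : Fin n → ℝ≥0∞ := fun j =>
    ∫⁻ z, ENNReal.ofReal (‖∑ i, rho d n s x i (x j + s⁻¹ • z) • x i‖ ^ 2) ∂ stdGaussian d
    with hB
  set c : Fin n → ℝ≥0∞ := fun i => ENNReal.ofReal (‖x i‖ ^ 2) with hc
  have haffc : ∀ j : Fin n, Continuous fun z : EuclideanSpace ℝ (Fin d) => x j + s⁻¹ • z :=
    fun j => continuous_const.add (continuous_id.const_smul s⁻¹)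
  have hρm : ∀ i j : Fin n, Measurable fun z : EuclideanSpace ℝ (Fin d) =>
      ENNReal.ofReal (rho d n s x i (x j + s⁻¹ • z)) := fun i j =>
    ENNReal.measurable_ofReal.comp ((LamSepAux.rho_measurable hn s x i).comp
      (haffc j).measurable)
  have hInt : ∀ j, ∫ z, ‖∑ i, rho d n s x i (x j + s⁻¹ • z) • x i‖ ^ 2 ∂ stdGaussian d
      = (B j).toReal := by
    intro j
    rw [integral_eq_lintegral_of_nonneg_ae (ae_of_all _ fun z => sq_nonneg _)
      (Continuous.aestronglyMeasurable ?_)]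
    exact (continuous_finset_sum _ fun i _ =>
      ((LamSepAux.rho_continuous hn s x i).comp (haffc j)).smul continuous_const).norm.pow 2
  have hBle : ∀ j, B j ≤ ∑ i, c i * A i j := by
    intro j
    have step1 : B j ≤ ∫⁻ z, ∑ i, c i * ENNReal.ofReal (rho d n s x i (x j + s⁻¹ • z))
        ∂ stdGaussian d := by
      refine lintegral_mono fun z => ?_
      calc ENNReal.ofReal (‖∑ i, rho d n s x i (x j + s⁻¹ • z) • x i‖ ^ 2)
          ≤ ENNReal.ofReal (∑ i, rho d n s x i (x j + s⁻¹ • z) * ‖x i‖ ^ 2) :=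
            ENNReal.ofReal_le_ofReal (LamSepAux.jensen hn s x _)
        _ = ∑ i, c i * ENNReal.ofReal (rho d n s x i (x j + s⁻¹ • z)) := by
            rw [ENNReal.ofReal_sum_of_nonneg fun i _ =>
              mul_nonneg (LamSepAux.rho_nonneg hn s x i _) (sq_nonneg _)]
            refine Finset.sum_congr rfl fun i _ => ?_
            rw [mul_comm, ENNReal.ofReal_mul (sq_nonneg _)]
    refine step1.trans (le_of_eq ?_)
    rw [lintegral_finset_sum _ fun i _ => (hρm i j).const_mul (c i)]
    exact Finset.sum_congr rfl fun i _ => lintegral_const_mul _ (hρm i j)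
  have hAsum : ∀ i, ∑ j, A i j = 1 := by
    intro i
    calc ∑ j, A i j = ∑ j, A j i :=
          Finset.sum_congr rfl fun j _ => LamSepAux.Abar_symm hn hs x i j
      _ = 1 := LamSepAux.Abar_row_sum hn hs x i
  set St : ℝ≥0∞ := ∑ i, c i with hSt
  have hStne : St ≠ ⊤ := by
    rw [hSt]
    exact (ENNReal.sum_lt_top.mpr fun i _ => ENNReal.ofReal_lt_top).ne
  have hRsum : ∑ j, ∑ i, c i * A i j = St := by
    rw [Finset.sum_comm]
    calc ∑ i, ∑ j, c i * A i j = ∑ i, c i * ∑ j, A i j :=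
          Finset.sum_congr rfl fun i _ => (Finset.mul_sum _ _ _).symm
      _ = St := Finset.sum_congr rfl fun i _ => by rw [hAsum i, mul_one]
  have hBsum : ∑ j, B j ≤ St :=
    le_trans (Finset.sum_le_sum fun j _ => hBle j) (le_of_eq hRsum)
  have hBne : ∀ j, B j ≠ ⊤ := fun j =>
    ne_top_of_le_ne_top hStne
      (le_trans (Finset.single_le_sum (fun j _ => (zero_le : 0 ≤ B j)) (Finset.mem_univ j)) hBsum)
  have hS : ∑ i, ‖x i‖ ^ 2 = (d : ℝ) * n := by
    have h := hvar
    field_simp at h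
    linarith
  have hsum_le : ∑ j, ∫ z, ‖∑ i, rho d n s x i (x j + s⁻¹ • z) • x i‖ ^ 2 ∂ stdGaussian d
      ≤ (d : ℝ) * n := by
    calc ∑ j, ∫ z, ‖∑ i, rho d n s x i (x j + s⁻¹ • z) • x i‖ ^ 2 ∂ stdGaussian d
        = ∑ j, (B j).toReal := Finset.sum_congr rfl fun j _ => hInt j
      _ = (∑ j, B j).toReal := (ENNReal.toReal_sum fun j _ => hBne j).symm
      _ ≤ St.toReal := ENNReal.toReal_mono hStne hBsum
      _ = ∑ i, ‖x i‖ ^ 2 := by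
          rw [hSt, ENNReal.toReal_sum fun i _ => ENNReal.ofReal_ne_top]
          exact Finset.sum_congr rfl fun i _ => ENNReal.toReal_ofReal (sq_nonneg _)
      _ ≤ (d : ℝ) * n := le_of_eq hS
  rw [lamSep]
  calc (1 / ((d : ℝ) * n)) *
        ∑ j, ∫ z, ‖∑ i, rho d n s x i (x j + s⁻¹ • z) • x i‖ ^ 2 ∂ stdGaussian d
      ≤ (1 / ((d : ℝ) * n)) * ((d : ℝ) * n) :=
        mul_le_mul_of_nonneg_left hsum_le (by positivity)
    _ = 1 := by field_simp
end

section
/- For every b ∈ [0,4), the function r(t) = √(1 − b t + b t²) is well defined and strictly positive on [0,1], satisfies the boundary conditions r(0) = r(1) = 1, and solves the ODE r̈(t) = (b − b²/4) / r(t)³ for all t ∈ (0,1). -/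
open Real

/-- For every `b ∈ [0,4)`, the function `r(t) = √(1 − b t + b t²)` is well defined and
strictly positive on `[0,1]`, satisfies `r(0) = r(1) = 1`, and solves the ODE
`r̈(t) = (b − b²/4) / r(t)³` on `(0,1)`. -/
theorem sqrt_quadratic_solves_ode (b : ℝ) (hb : b ∈ Set.Ico (0 : ℝ) 4) :
    (∀ t ∈ Set.Icc (0 : ℝ) 1, 0 < 1 - b * t + b * t ^ 2) ∧
    (∀ t ∈ Set.Icc (0 : ℝ) 1, 0 < Real.sqrt (1 - b * t + b * t ^ 2)) ∧
    Real.sqrt (1 - b * 0 + b * 0 ^ 2) = 1 ∧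
    Real.sqrt (1 - b * 1 + b * 1 ^ 2) = 1 ∧
    ∀ t ∈ Set.Ioo (0 : ℝ) 1,
      deriv (deriv (fun u => Real.sqrt (1 - b * u + b * u ^ 2))) t =
        (b - b ^ 2 / 4) / (Real.sqrt (1 - b * t + b * t ^ 2)) ^ 3 := by
  obtain ⟨hb0, hb4⟩ := hb
  -- the quadratic is positive everywhere
  have hq : ∀ t : ℝ, 0 < 1 - b * t + b * t ^ 2 := by
    intro t
    nlinarith [sq_nonneg (t - 1/2), mul_nonneg hb0 (sq_nonneg (t - 1/2))]
  have hsq : ∀ t : ℝ, 0 < Real.sqrt (1 - b * t + b * t ^ 2) := fun t =>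
    Real.sqrt_pos.mpr (hq t)
  -- first derivative
  have hqderiv : ∀ t : ℝ, HasDerivAt (fun u => 1 - b * u + b * u ^ 2) (2 * b * t - b) t := by
    intro t
    have h1 : HasDerivAt (fun u : ℝ => 1 - b * u + b * u ^ 2)
        (0 - b * 1 + b * (2 * t ^ 1)) t := by
      exact (((hasDerivAt_const t (1:ℝ)).sub ((hasDerivAt_id t).const_mul b)).add
        ((hasDerivAt_pow 2 t).const_mul b))
    convert h1 using 1; ring
  have hf : ∀ t : ℝ, HasDerivAt (fun u => Real.sqrt (1 - b * u + b * u ^ 2))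
      ((2 * b * t - b) / (2 * Real.sqrt (1 - b * t + b * t ^ 2))) t := by
    intro t
    have h := (Real.hasDerivAt_sqrt (ne_of_gt (hq t))).comp t (hqderiv t)
    refine h.congr_deriv ?_; ring
  have hderiv1 : deriv (fun u => Real.sqrt (1 - b * u + b * u ^ 2)) =
      fun t => (2 * b * t - b) / (2 * Real.sqrt (1 - b * t + b * t ^ 2)) := by
    funext t; exact (hf t).deriv
  refine ⟨fun t _ => hq t, fun t _ => hsq t, by simp, by
    rw [show (1 - b * 1 + b * 1 ^ 2 : ℝ) = 1 by ring]; exact Real.sqrt_one, ?_⟩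
  intro t _
  rw [hderiv1]
  -- second derivative
  have hu : HasDerivAt (fun u : ℝ => 2 * b * u - b) (2 * b) t := by
    simpa using ((hasDerivAt_id t).const_mul (2 * b)).sub_const b
  have hv : HasDerivAt (fun u : ℝ => 2 * Real.sqrt (1 - b * u + b * u ^ 2))
      ((2 * b * t - b) / Real.sqrt (1 - b * t + b * t ^ 2)) t := by
    have := (hf t).const_mul 2
    refine this.congr_deriv ?_
    field_simp [(hsq t).ne']
  have hvne : 2 * Real.sqrt (1 - b * t + b * t ^ 2) ≠ 0 := mul_ne_zero two_ne_zero (hsq t).ne'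
  have hdiv := hu.fun_div hv hvne
  rw [hdiv.deriv]
  have hs := hsq t
  have hsq2 : Real.sqrt (1 - b * t + b * t ^ 2) ^ 2 = 1 - b * t + b * t ^ 2 :=
    Real.sq_sqrt (hq t).le
  field_simp
  linear_combination (16 * b) * hsq2
end

section
/- Let C > 0 and let r : [0,1] → (0,∞) be twice continuously differentiable with r̈(t) = C / r(t)³ for all t ∈ (0,1) and boundary conditions r(0) = r(1) = 1. Then there exists b ∈ (0,4) such that C = b − b²/4 and r(t) = √(1 − b t + b t²) for all t ∈ [0,1]. -/
open Real

/-- A function with vanishing derivative on the interior of a convex set,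
continuous on the set, is constant there. -/
lemma const_of_hasDerivAt_zero' {f : ℝ → ℝ} {D : Set ℝ} (hD : Convex ℝ D)
    (hc : ContinuousOn f D) (h : ∀ x ∈ interior D, HasDerivAt f 0 x) :
    ∀ x ∈ D, ∀ y ∈ D, f x = f y := by
  have hdiff : DifferentiableOn ℝ f (interior D) := fun x hx =>
    (h x hx).differentiableAt.differentiableWithinAt
  have h0 : ∀ x ∈ interior D, deriv f x = 0 := fun x hx => (h x hx).deriv
  have hmono := monotoneOn_of_deriv_nonneg hD hc hdiff fun x hx => (h0 x hx).ge
  have hanti := antitoneOn_of_deriv_nonpos hD hc hdiff fun x hx => (h0 x hx).le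
  intro x hx y hy
  rcases le_total x y with hxy | hxy
  · exact le_antisymm (hmono hx hy hxy) (hanti hx hy hxy)
  · exact le_antisymm (hanti hy hx hxy) (hmono hy hx hxy)

/-- Let `C > 0` and let `r : [0,1] → (0,∞)` be twice continuously differentiable with
`r̈(t) = C / r(t)³` on `(0,1)` and boundary conditions `r(0) = r(1) = 1`. Then there is
`b ∈ (0,4)` with `C = b − b²/4` and `r(t) = √(1 − b t + b t²)` on `[0,1]`. -/
theorem ode_solution_is_sqrt_quadratic (C : ℝ) (hC : 0 < C) (r : ℝ → ℝ)
    (hrpos : ∀ t ∈ Set.Icc (0 : ℝ) 1, 0 < r t)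
    (hr_cont : ContinuousOn r (Set.Icc 0 1))
    (hr_smooth : ContDiffOn ℝ 2 r (Set.Ioo 0 1))
    (hode : ∀ t ∈ Set.Ioo (0 : ℝ) 1, deriv (deriv r) t = C / (r t) ^ 3)
    (hr0 : r 0 = 1) (hr1 : r 1 = 1) :
    ∃ b ∈ Set.Ioo (0 : ℝ) 4, C = b - b ^ 2 / 4 ∧
      ∀ t ∈ Set.Icc (0 : ℝ) 1, r t = Real.sqrt (1 - b * t + b * t ^ 2) := by
  have hIoo : IsOpen (Set.Ioo (0:ℝ) 1) := isOpen_Ioo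
  have hsub : Set.Ioo (0:ℝ) 1 ⊆ Set.Icc 0 1 := Set.Ioo_subset_Icc_self
  have hrne : ∀ t ∈ Set.Ioo (0:ℝ) 1, r t ≠ 0 := fun t ht => (hrpos t (hsub ht)).ne'
  -- first derivative
  have hdiff : DifferentiableOn ℝ r (Set.Ioo 0 1) := hr_smooth.differentiableOn (by norm_num)
  have hd1 : ∀ t ∈ Set.Ioo (0:ℝ) 1, HasDerivAt r (deriv r t) t := fun t ht =>
    ((hdiff t ht).differentiableAt (hIoo.mem_nhds ht)).hasDerivAt
  -- second derivative
  have hv_smooth : ContDiffOn ℝ 1 (deriv r) (Set.Ioo 0 1) :=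
    hr_smooth.deriv_of_isOpen hIoo (by norm_num)
  have hd2 : ∀ t ∈ Set.Ioo (0:ℝ) 1, HasDerivAt (deriv r) (C / r t ^ 3) t := by
    intro t ht
    have := (((hv_smooth.differentiableOn (by norm_num)) t ht).differentiableAt
      (hIoo.mem_nhds ht)).hasDerivAt
    rwa [hode t ht] at this
  -- energy conservation
  set g : ℝ → ℝ := fun t => (deriv r t) ^ 2 + C / (r t) ^ 2 with hg_def
  have hg_deriv : ∀ t ∈ Set.Ioo (0:ℝ) 1, HasDerivAt g 0 t := by
    intro t ht
    have h1 : HasDerivAt (fun s => (deriv r s) ^ 2)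
        (2 * deriv r t ^ 1 * (C / r t ^ 3)) t := (hd2 t ht).pow 2
    have h2 : HasDerivAt (fun s => C / (r s) ^ 2)
        (C * (-(2 * r t ^ 1 * deriv r t) / ((r t ^ 2) ^ 2))) t := by
      have := (((hd1 t ht).pow 2).inv (pow_ne_zero 2 (hrne t ht))).const_mul C
      simpa [div_eq_mul_inv] using this
    have := h1.add h2
    refine this.congr_deriv ?_
    have hne := hrne t ht
    field_simp
    ring
  have htmem : (1/2 : ℝ) ∈ Set.Ioo (0:ℝ) 1 := by norm_num
  obtain ⟨E, hE_def⟩ : ∃ E : ℝ, E = g (1/2) := ⟨_, rfl⟩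
  have hg_const : ∀ t ∈ Set.Ioo (0:ℝ) 1, g t = E := by
    intro t ht
    have := const_of_hasDerivAt_zero' (convex_Ioo (0:ℝ) 1)
      (fun x hx => ((hg_deriv x hx).continuousAt).continuousWithinAt)
      (fun x hx => hg_deriv x (by rwa [interior_Ioo] at hx)) t ht (1/2) htmem
    exact this.trans hE_def.symm
  -- first integration: w1 = 2 r r' - (-E + 2 E t) is constant on Ioo
  set w1 : ℝ → ℝ := fun s => 2 * r s * deriv r s - (-E + 2 * E * s) with hw1_def
  have hw1_deriv : ∀ t ∈ Set.Ioo (0:ℝ) 1, HasDerivAt w1 0 t := by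
    intro t ht
    have h1 : HasDerivAt (fun s => 2 * r s * deriv r s)
        (2 * deriv r t * deriv r t + 2 * r t * (C / r t ^ 3)) t := by
      have := (((hd1 t ht).const_mul 2).mul (hd2 t ht))
      exact this.congr_deriv (by ring)
    have h2 : HasDerivAt (fun s : ℝ => -E + 2 * E * s) (2 * E) t := by
      simpa using ((hasDerivAt_id t).const_mul (2*E)).const_add (-E)
    have := h1.sub h2
    refine this.congr_deriv ?_
    have hg := hg_const t ht
    simp only [hg_def] at hg
    have hne := hrne t ht
    rw [← hg]
    field_simp
    ring
  obtain ⟨K, hK_def⟩ : ∃ K : ℝ, K = w1 (1/2) := ⟨_, rfl⟩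
  have hw1_const : ∀ t ∈ Set.Ioo (0:ℝ) 1, w1 t = K := by
    intro t ht
    have := const_of_hasDerivAt_zero' (convex_Ioo (0:ℝ) 1)
      (fun x hx => ((hw1_deriv x hx).continuousAt).continuousWithinAt)
      (fun x hx => hw1_deriv x (by rwa [interior_Ioo] at hx)) t ht (1/2) htmem
    exact this.trans hK_def.symm
  -- second integration: w = r² - (1 - E t + E t²) - K t is constant on Icc
  set w : ℝ → ℝ := fun s => r s ^ 2 - (1 - E * s + E * s ^ 2) - K * s with hw_def
  have hw_deriv : ∀ t ∈ interior (Set.Icc (0:ℝ) 1), HasDerivAt w 0 t := by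
    intro t ht
    rw [interior_Icc] at ht
    have hpow : HasDerivAt (fun s => r s ^ 2) (2 * r t ^ 1 * deriv r t) t := (hd1 t ht).pow 2
    have h1 : HasDerivAt (fun s : ℝ => E * s) E t := by
      simpa using (hasDerivAt_id t).const_mul E
    have h2 : HasDerivAt (fun s : ℝ => E * s ^ 2) (E * (2 * t)) t := by
      have := (hasDerivAt_pow 2 t).const_mul E
      simpa [mul_assoc] using this
    have hq : HasDerivAt (fun s : ℝ => 1 - E * s + E * s ^ 2) (-E + E * (2 * t)) t :=
      (h1.const_sub 1).add h2
    have hk : HasDerivAt (fun s : ℝ => K * s) K t := by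
      simpa using (hasDerivAt_id t).const_mul K
    have := (hpow.sub hq).sub hk
    refine this.congr_deriv ?_
    have h := hw1_const t ht
    simp only [hw1_def] at h
    simp only [pow_one]
    linarith
  have hw_cont : ContinuousOn w (Set.Icc (0:ℝ) 1) := by
    apply ContinuousOn.sub
    apply ContinuousOn.sub
    · exact hr_cont.pow 2
    · exact ((continuous_const.sub (continuous_const.mul continuous_id)).add
        (continuous_const.mul (continuous_pow 2))).continuousOn
    · exact (continuous_const.mul continuous_id).continuousOn
  have hw_const : ∀ t ∈ Set.Icc (0:ℝ) 1, w t = w 0 :=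
    fun t ht => const_of_hasDerivAt_zero' (convex_Icc (0:ℝ) 1) hw_cont hw_deriv t ht 0
      (Set.left_mem_Icc.mpr zero_le_one)
  have hw0 : w 0 = 0 := by simp [hw_def, hr0]
  have hK0 : K = 0 := by
    have h1 := hw_const 1 (Set.right_mem_Icc.mpr zero_le_one)
    rw [hw0] at h1
    simp only [hw_def, hr1] at h1
    linarith
  have hsq : ∀ t ∈ Set.Icc (0:ℝ) 1, r t ^ 2 = 1 - E * t + E * t ^ 2 := by
    intro t ht
    have := hw_const t ht
    rw [hw0] at this
    simp only [hw_def, hK0] at this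
    linarith
  -- compute at t = 1/2
  have hrne' : r (1/2) ≠ 0 := hrne _ htmem
  have hv_half : deriv r (1/2) = 0 := by
    have h : w1 (1/2) = 0 := (hw1_const (1/2) htmem).trans hK0
    simp only [hw1_def] at h
    have h2 : 2 * r (1/2) * deriv r (1/2) = 0 := by linarith
    rcases mul_eq_zero.mp h2 with h' | h'
    · rcases mul_eq_zero.mp h' with h'' | h''
      · norm_num at h''
      · exact absurd h'' hrne'
    · exact h'
  have hrsq_half : r (1/2) ^ 2 = 1 - E / 4 := by
    have := hsq (1/2) (hsub htmem)
    norm_num at this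
    linarith
  have hrsq_pos : (0:ℝ) < r (1/2) ^ 2 := pow_pos (hrpos _ (hsub htmem)) 2
  have h14 : (0:ℝ) < 1 - E / 4 := by rwa [hrsq_half] at hrsq_pos
  have hEval : E = (deriv r (1/2)) ^ 2 + C / r (1/2) ^ 2 := by rw [hE_def]
  rw [hv_half, hrsq_half] at hEval
  have hE2 : E = C / (1 - E / 4) := by simpa using hEval
  have hmul : C = E * (1 - E / 4) := ((eq_div_iff h14.ne').mp hE2).symm
  have hCE : C = E - E ^ 2 / 4 := by rw [hmul]; ring
  have hEpos : 0 < E := by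
    by_contra h
    push_neg at h
    nlinarith
  have hElt : E < 4 := by
    by_contra h
    push_neg at h
    nlinarith
  refine ⟨E, ⟨hEpos, hElt⟩, hCE, ?_⟩
  intro t ht
  rw [← hsq t ht]
  exact (Real.sqrt_sq (hrpos t ht).le).symm
end

section
/- Let γ : [0, π/2] → ℝ be continuously differentiable, and let r, θ : [0,1] → ℝ be continuous on [0,1], twice continuously differentiable on (0,1), with r_t > 0, θ̇_t > 0, and γ(θ_t) > 0 for all t ∈ (0,1), boundary conditions r(0) = r(1) = 1, θ(0) = 0, θ(1) = π/2, and satisfying on (0,1) the Euler–Lagrange equations of the kinetic energy functional E(r,θ) = ∫₀¹ (ṙ_t² + r_t² θ̇_t² γ(θ_t)) dt, namely r̈_t = r_t θ̇_t² γ(θ_t) and 4 r_t ṙ_t θ̇_t γ(θ_t) + 2 r_t² θ̈_t γ(θ_t) + r_t² θ̇_t² γ'(θ_t) = 0. Then there exists b ∈ (0,4) such that for all t ∈ (0,1): r_t = √(1 − b t + b t²) and θ̇_t = (1/(1 − b t + b t²)) · √((b − b²/4) / γ(θ_t)). (Theorem 3.1 of the paper, characterizing kinetic optimal Gaussian paths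 in the polar coordinates a_t = r_t sin θ_t, m_t = r_t cos θ_t.) -/
open Real

lemma const_on_Ioo {f : ℝ → ℝ} {a b : ℝ}
    (hf : ∀ t ∈ Set.Ioo a b, HasDerivAt f 0 t) :
    ∀ x ∈ Set.Ioo a b, ∀ y ∈ Set.Ioo a b, f x = f y := by
  have key : ∀ x ∈ Set.Ioo a b, ∀ y ∈ Set.Ioo a b, x ≤ y → f y = f x := by
    intro x hx y hy hxy
    have hsub : Set.Icc x y ⊆ Set.Ioo a b := Set.Icc_subset_Ioo hx.1 hy.2
    have hcont : ContinuousOn f (Set.Icc x y) := fun z hz =>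
      ((hf z (hsub hz)).continuousAt).continuousWithinAt
    exact constant_of_has_deriv_right_zero hcont
      (fun z hz => ((hf z (hsub (Set.Ico_subset_Icc_self hz))).hasDerivWithinAt)) y
      (Set.right_mem_Icc.2 hxy)
  intro x hx y hy
  rcases le_total x y with h | h
  · exact (key x hx y hy h).symm
  · exact key y hy x hx h


/-- Theorem 3.1: characterization of kinetic optimal Gaussian paths in polar coordinates.
If `(r, θ)` satisfies the Euler–Lagrange equations of
`E(r,θ) = ∫₀¹ (ṙ_t² + r_t² θ̇_t² γ(θ_t)) dt` on `(0,1)` with `r > 0`, `θ̇ > 0`,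
`γ(θ_t) > 0`, and boundary conditions `r(0) = r(1) = 1`, `θ(0) = 0`, `θ(1) = π/2`,
then there is `b ∈ (0,4)` such that `r_t = √(1 − b t + b t²)` and
`θ̇_t = (1/(1 − b t + b t²)) √((b − b²/4)/γ(θ_t))` on `(0,1)`. -/
theorem kinetic_optimal_path_characterization (γ : ℝ → ℝ)
    (hγ : ContDiffOn ℝ 1 γ (Set.Icc 0 (π / 2))) (r θ : ℝ → ℝ)
    (hr_cont : ContinuousOn r (Set.Icc 0 1))
    (hθ_cont : ContinuousOn θ (Set.Icc 0 1))
    (hr_smooth : ContDiffOn ℝ 2 r (Set.Ioo 0 1))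
    (hθ_smooth : ContDiffOn ℝ 2 θ (Set.Ioo 0 1))
    (hrpos : ∀ t ∈ Set.Ioo (0 : ℝ) 1, 0 < r t)
    (hθ'pos : ∀ t ∈ Set.Ioo (0 : ℝ) 1, 0 < deriv θ t)
    (hγpos : ∀ t ∈ Set.Ioo (0 : ℝ) 1, 0 < γ (θ t))
    (hr0 : r 0 = 1) (hr1 : r 1 = 1) (hθ0 : θ 0 = 0) (hθ1 : θ 1 = π / 2)
    (hEL_r : ∀ t ∈ Set.Ioo (0 : ℝ) 1,
      deriv (deriv r) t = r t * (deriv θ t) ^ 2 * γ (θ t))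
    (hEL_θ : ∀ t ∈ Set.Ioo (0 : ℝ) 1,
      4 * r t * deriv r t * deriv θ t * γ (θ t) +
        2 * (r t) ^ 2 * deriv (deriv θ) t * γ (θ t) +
        (r t) ^ 2 * (deriv θ t) ^ 2 * deriv γ (θ t) = 0) :
    ∃ b ∈ Set.Ioo (0 : ℝ) 4, ∀ t ∈ Set.Ioo (0 : ℝ) 1,
      r t = Real.sqrt (1 - b * t + b * t ^ 2) ∧
      deriv θ t = (1 / (1 - b * t + b * t ^ 2)) *
        Real.sqrt ((b - b ^ 2 / 4) / γ (θ t)) := by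
  have hIopen : IsOpen (Set.Ioo (0:ℝ) 1) := isOpen_Ioo
  have hmem : ∀ t ∈ Set.Ioo (0:ℝ) 1, Set.Ioo (0:ℝ) 1 ∈ nhds t := fun t ht => hIopen.mem_nhds ht
  -- differentiability facts
  have hrd := (contDiffOn_succ_iff_deriv_of_isOpen hIopen).1
    (by exact_mod_cast hr_smooth : ContDiffOn ℝ (1+1) r (Set.Ioo 0 1))
  have hθd := (contDiffOn_succ_iff_deriv_of_isOpen hIopen).1
    (by exact_mod_cast hθ_smooth : ContDiffOn ℝ (1+1) θ (Set.Ioo 0 1))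
  have hrD : ∀ t ∈ Set.Ioo (0:ℝ) 1, HasDerivAt r (deriv r t) t := fun t ht =>
    (hrd.1.differentiableAt (hmem t ht)).hasDerivAt
  have hr'D : ∀ t ∈ Set.Ioo (0:ℝ) 1, HasDerivAt (deriv r) (deriv (deriv r) t) t := fun t ht =>
    ((hrd.2.2.differentiableOn one_ne_zero).differentiableAt (hmem t ht)).hasDerivAt
  have hθD : ∀ t ∈ Set.Ioo (0:ℝ) 1, HasDerivAt θ (deriv θ t) t := fun t ht =>
    (hθd.1.differentiableAt (hmem t ht)).hasDerivAt
  have hθ'D : ∀ t ∈ Set.Ioo (0:ℝ) 1, HasDerivAt (deriv θ) (deriv (deriv θ) t) t := fun t ht =>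
    ((hθd.2.2.differentiableOn one_ne_zero).differentiableAt (hmem t ht)).hasDerivAt
  -- θ t stays in (0, π/2)
  have hθmono : StrictMonoOn θ (Set.Icc 0 1) := by
    apply strictMonoOn_of_deriv_pos (convex_Icc 0 1) hθ_cont
    intro x hx
    rw [interior_Icc] at hx
    exact hθ'pos x hx
  have hθrange : ∀ t ∈ Set.Ioo (0:ℝ) 1, θ t ∈ Set.Ioo 0 (π/2) := by
    intro t ht
    constructor
    · have := hθmono (Set.mem_Icc.2 ⟨le_refl 0, by norm_num⟩) ⟨ht.1.le, ht.2.le⟩ ht.1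
      rwa [hθ0] at this
    · have := hθmono ⟨ht.1.le, ht.2.le⟩ (Set.mem_Icc.2 ⟨by norm_num, le_refl 1⟩) ht.2
      rwa [hθ1] at this
  -- derivative of γ ∘ θ
  have hγθD : ∀ t ∈ Set.Ioo (0:ℝ) 1,
      HasDerivAt (fun u => γ (θ u)) (deriv γ (θ t) * deriv θ t) t := by
    intro t ht
    have h1 : Set.Icc 0 (π/2) ∈ nhds (θ t) :=
      Icc_mem_nhds (hθrange t ht).1 (hθrange t ht).2
    exact (((hγ.differentiableOn one_ne_zero).differentiableAt h1).hasDerivAt).comp t (hθD t ht)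
  -- Energy is constant
  have hEderiv : ∀ t ∈ Set.Ioo (0:ℝ) 1,
      HasDerivAt (fun u => (deriv r u)^2 + (r u)^2 * (deriv θ u)^2 * γ (θ u)) 0 t := by
    intro t ht
    have hd : HasDerivAt (fun u => (deriv r u)^2 + (r u)^2 * (deriv θ u)^2 * γ (θ u))
        ((2 * deriv r t ^ 1 * deriv (deriv r) t) +
          (((2 * r t ^ 1 * deriv r t) * (deriv θ t)^2 +
            (r t)^2 * (2 * deriv θ t ^ 1 * deriv (deriv θ) t)) * γ (θ t) +
            ((r t)^2 * (deriv θ t)^2) * (deriv γ (θ t) * deriv θ t))) t :=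
      ((hr'D t ht).pow 2).add ((((hrD t ht).pow 2).mul ((hθ'D t ht).pow 2)).mul (hγθD t ht))
    have h0 : ((2 * deriv r t ^ 1 * deriv (deriv r) t) +
          (((2 * r t ^ 1 * deriv r t) * (deriv θ t)^2 +
            (r t)^2 * (2 * deriv θ t ^ 1 * deriv (deriv θ) t)) * γ (θ t) +
            ((r t)^2 * (deriv θ t)^2) * (deriv γ (θ t) * deriv θ t))) = 0 := by
      linear_combination 2 * deriv r t * hEL_r t ht + deriv θ t * hEL_θ t ht
    rwa [h0] at hd
  have hhalf : (1/2 : ℝ) ∈ Set.Ioo (0:ℝ) 1 := by constructor <;> norm_num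
  obtain ⟨b, hbdef⟩ : ∃ b : ℝ,
      (deriv r (1/2))^2 + (r (1/2))^2 * (deriv θ (1/2))^2 * γ (θ (1/2)) = b := ⟨_, rfl⟩
  have hEb : ∀ t ∈ Set.Ioo (0:ℝ) 1,
      (deriv r t)^2 + (r t)^2 * (deriv θ t)^2 * γ (θ t) = b :=
    fun t ht => (const_on_Ioo hEderiv t ht (1/2) hhalf).trans hbdef
  -- u = 2 r r' - 2 b t is constant
  have hUderiv : ∀ t ∈ Set.Ioo (0:ℝ) 1,
      HasDerivAt (fun u => 2 * (r u * deriv r u) - 2 * b * u) 0 t := by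
    intro t ht
    have hd : HasDerivAt (fun u => 2 * (r u * deriv r u) - 2 * b * u)
        (2 * (deriv r t * deriv r t + r t * deriv (deriv r) t) - 2 * b * 1) t :=
      (((hrD t ht).mul (hr'D t ht)).const_mul 2).sub ((hasDerivAt_id t).const_mul (2*b))
    have h0 : (2 * (deriv r t * deriv r t + r t * deriv (deriv r) t) - 2 * b * 1) = 0 := by
      linear_combination 2 * r t * hEL_r t ht + 2 * hEb t ht
    rwa [h0] at hd
  obtain ⟨β, hβdef⟩ : ∃ β : ℝ, 2 * (r (1/2) * deriv r (1/2)) - 2 * b * (1/2) = β := ⟨_, rfl⟩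
  have hUb : ∀ t ∈ Set.Ioo (0:ℝ) 1, 2 * (r t * deriv r t) - 2 * b * t = β :=
    fun t ht => (const_on_Ioo hUderiv t ht (1/2) hhalf).trans hβdef
  -- v = r^2 - b t^2 - β t is constant
  have hVderiv : ∀ t ∈ Set.Ioo (0:ℝ) 1,
      HasDerivAt (fun u => (r u)^2 - b * u^2 - β * u) 0 t := by
    intro t ht
    have hd : HasDerivAt (fun u => (r u)^2 - b * u^2 - β * u)
        ((2 * r t ^ 1 * deriv r t) - b * (2 * t ^ 1 * 1) - β * 1) t := by
      exact (((hrD t ht).pow 2).sub (((hasDerivAt_id t).pow 2).const_mul b)).sub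
        ((hasDerivAt_id t).const_mul β)
    have h0 : ((2 * r t ^ 1 * deriv r t) - b * (2 * t ^ 1 * 1) - β * 1) = 0 := by
      linear_combination hUb t ht
    rwa [h0] at hd
  obtain ⟨α, hαdef⟩ : ∃ α : ℝ, (r (1/2))^2 - b * (1/2)^2 - β * (1/2) = α := ⟨_, rfl⟩
  have hVb : ∀ t ∈ Set.Ioo (0:ℝ) 1, (r t)^2 - b * t^2 - β * t = α :=
    fun t ht => (const_on_Ioo hVderiv t ht (1/2) hhalf).trans hαdef
  -- endpoints via limits
  have hne0 : (nhdsWithin (0:ℝ) (Set.Ioo (0:ℝ) 1)).NeBot := by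
    refine mem_closure_iff_nhdsWithin_neBot.mp ?_
    rw [closure_Ioo (by norm_num : (0:ℝ) ≠ 1)]
    exact ⟨le_refl 0, by norm_num⟩
  have hne1 : (nhdsWithin (1:ℝ) (Set.Ioo (0:ℝ) 1)).NeBot := by
    refine mem_closure_iff_nhdsWithin_neBot.mp ?_
    rw [closure_Ioo (by norm_num : (0:ℝ) ≠ 1)]
    exact ⟨by norm_num, le_refl 1⟩
  have hend : ∀ x ∈ Set.Icc (0:ℝ) 1, (nhdsWithin x (Set.Ioo (0:ℝ) 1)).NeBot →
      (r x)^2 = b * x^2 + β * x + α := by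
    intro x hx hnb
    have t1 : Filter.Tendsto (fun t => (r t)^2) (nhdsWithin x (Set.Ioo (0:ℝ) 1))
        (nhds ((r x)^2)) :=
      ((hr_cont.continuousWithinAt hx).mono Set.Ioo_subset_Icc_self).pow 2
    have t2 : Filter.Tendsto (fun t => b * t^2 + β * t + α)
        (nhdsWithin x (Set.Ioo (0:ℝ) 1)) (nhds (b * x^2 + β * x + α)) := by
      apply Filter.Tendsto.mono_left _ nhdsWithin_le_nhds
      have hc : Continuous (fun t : ℝ => b * t^2 + β * t + α) :=
        ((continuous_const.mul (continuous_pow 2)).add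
          (continuous_const.mul continuous_id)).add continuous_const
      exact hc.tendsto x
    have heq : (fun t => (r t)^2) =ᶠ[nhdsWithin x (Set.Ioo (0:ℝ) 1)]
        (fun t => b * t^2 + β * t + α) := by
      filter_upwards [self_mem_nhdsWithin] with t ht
      have := hVb t ht
      linarith
    exact tendsto_nhds_unique t1 (t2.congr' heq.symm)
  have h0 : (1:ℝ) = α := by
    have := hend 0 (by constructor <;> norm_num) hne0
    rw [hr0] at this; linarith
  have h1 : β = -b := by
    have := hend 1 (by constructor <;> norm_num) hne1
    rw [hr1] at this; linarith
  -- r^2 formula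
  have hs : ∀ t ∈ Set.Ioo (0:ℝ) 1, (r t)^2 = 1 - b * t + b * t^2 := by
    intro t ht
    have := hVb t ht
    rw [h1] at this
    linarith
  -- b bounds
  have hb0 : 0 < b := by
    have h := hEb (1/2) hhalf
    nlinarith [sq_nonneg (deriv r (1/2)),
      mul_pos (mul_pos (pow_pos (hrpos (1/2) hhalf) 2) (pow_pos (hθ'pos (1/2) hhalf) 2))
        (hγpos (1/2) hhalf)]
  have hb4 : b < 4 := by
    have h := hs (1/2) hhalf
    have := pow_pos (hrpos (1/2) hhalf) 2
    norm_num at h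
    linarith
  refine ⟨b, ⟨hb0, hb4⟩, ?_⟩
  intro t ht
  have hst : (r t)^2 = 1 - b * t + b * t^2 := hs t ht
  have hspos : 0 < 1 - b * t + b * t^2 := hst ▸ pow_pos (hrpos t ht) 2
  constructor
  · rw [← hst, Real.sqrt_sq (hrpos t ht).le]
  · -- θ' formula
    have hi := hEb t ht
    have hii : 2 * r t * deriv r t = 2 * b * t - b := by
      have := hUb t ht; rw [h1] at this; linarith
    have hkey : ((r t)^2)^2 * (deriv θ t)^2 * γ (θ t) = b - b^2/4 := by
      linear_combination (r t)^2 * hi + b * hst - (2 * r t * deriv r t + 2*b*t - b)/4 * hii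
    have hγt := hγpos t ht
    have hrne : r t ≠ 0 := (hrpos t ht).ne'
    have hγne : γ (θ t) ≠ 0 := hγt.ne'
    have hθ'sq : (deriv θ t)^2 = ((b - b^2/4) / γ (θ t)) / (1 - b * t + b * t^2)^2 := by
      rw [← hst]
      rw [div_div, eq_div_iff (by positivity)]
      linear_combination hkey
    have := Real.sqrt_sq (hθ'pos t ht).le
    rw [← this, hθ'sq, Real.sqrt_div' _ (sq_nonneg _), Real.sqrt_sq hspos.le]
    ring
end
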